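/- Let (β̂, δ̂) be the lava solution with active set Ĵ = {j : δ̂_j ≠ 0}, P_Ĵ the orthogonal projection onto the column span of X_Ĵ, K_Ĵ = I_n − P_Ĵ, and Û = Y − X(β̂ + δ̂). Then the post-lava fit satisfies X(β̂ + δ̃) = X(β̂ + δ̂) + P_Ĵ·Û, where δ̃ minimizes ‖Y − Xβ̂ − Xδ‖₂² subject to δ_j = 0 for j ∉ Ĵ. -/

import Mathlib

open Matrix
open scoped RealInnerProductSpace

/-- the post-lava fit equals the lava fit plus the projection of the
lava residual onto the span of the selected columns:
`X(β̂ + δ̃) = X(β̂ + δ̂) + P_Ĵ Û` where `Û = Y − X(β̂ + δ̂)`, `P_Ĵ` is the orthogonal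
projection onto the column span of `X_Ĵ`, `Ĵ = {j : δ̂_j ≠ 0}`, and `δ̃` minimizes
`‖Y − Xβ̂ − Xδ‖₂²` over `δ` supported on `Ĵ`. -/
theorem post_lava_fit (n p : ℕ)
    (X : Matrix (Fin n) (Fin p) ℝ) (Y : EuclideanSpace ℝ (Fin n))
    (βhat δhat δtil : Fin p → ℝ)
    (hδtil_supp : ∀ j, δhat j = 0 → δtil j = 0)
    (hδtil_min : ∀ δ : Fin p → ℝ, (∀ j, δhat j = 0 → δ j = 0) →
      (∑ i, (Y i - X.mulVec βhat i - X.mulVec δtil i)^2)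
        ≤ ∑ i, (Y i - X.mulVec βhat i - X.mulVec δ i)^2) :
    let S : Submodule ℝ (EuclideanSpace ℝ (Fin n)) :=
      Submodule.span ℝ {c : EuclideanSpace ℝ (Fin n) | ∃ j : Fin p, δhat j ≠ 0 ∧ c = fun i => X i j}
    let Uhat : EuclideanSpace ℝ (Fin n) := WithLp.toLp 2 (fun i => Y i - X.mulVec (βhat + δhat) i)
    (WithLp.toLp 2 (fun i => X.mulVec (βhat + δtil) i) : EuclideanSpace ℝ (Fin n))
      = WithLp.toLp 2 (fun i => X.mulVec (βhat + δhat) i + (Submodule.orthogonalProjection S Uhat : EuclideanSpace ℝ (Fin n)) i) := by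
  classical
  intro S Uhat
  -- Any vector `X δ` with `δ` supported on the active set lies in `S`.
  have hmem : ∀ δ : Fin p → ℝ, (∀ j, δhat j = 0 → δ j = 0) →
      (WithLp.toLp 2 (fun i => X.mulVec δ i) : EuclideanSpace ℝ (Fin n)) ∈ S := by
    intro δ hδ
    have hrep : (WithLp.toLp 2 (fun i => X.mulVec δ i) : EuclideanSpace ℝ (Fin n))
        = ∑ j, δ j • (WithLp.toLp 2 (fun i => X i j) : EuclideanSpace ℝ (Fin n)) := by
      ext i
      simp [Matrix.mulVec, dotProduct, mul_comm]
    rw [hrep]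
    refine Submodule.sum_mem _ (fun j _ => ?_)
    by_cases hj : δhat j = 0
    · simp [hδ j hj]
    · exact Submodule.smul_mem _ _ (Submodule.subset_span ⟨j, hj, rfl⟩)
  set b : EuclideanSpace ℝ (Fin n) := WithLp.toLp 2 (fun i => Y i - X.mulVec βhat i) with hb
  set v : EuclideanSpace ℝ (Fin n) := WithLp.toLp 2 (fun i => X.mulVec δtil i) with hv
  have hvS : v ∈ S := hmem δtil hδtil_supp
  -- orthogonality of the residual to the generators
  have horth : ∀ w ∈ S, (inner ℝ (b - v) w : ℝ) = 0 := by
    intro w hw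
    induction hw using Submodule.span_induction with
    | mem c hc =>
      obtain ⟨j, hj, hc⟩ := hc
      obtain rfl : c = WithLp.toLp 2 (fun i => X i j) := by rw [← hc]
      set A : ℝ := ∑ i, (X i j)^2 with hA
      set B : ℝ := ∑ i, (Y i - X.mulVec βhat i - X.mulVec δtil i) * X i j with hB
      have hAnn : 0 ≤ A := Finset.sum_nonneg fun i _ => sq_nonneg _
      have key : ∀ t : ℝ, 2*t*B ≤ t^2*A := by
        intro t
        have hsupp : ∀ k, δhat k = 0 → ((δtil + Pi.single j t : Fin p → ℝ)) k = 0 := by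
          intro k hk
          have hkj : k ≠ j := fun h => hj (h ▸ hk)
          simp [hδtil_supp k hk, Pi.single_eq_of_ne hkj]
        have hmin := hδtil_min (δtil + Pi.single j t) hsupp
        have hexp : ∀ i, (Y i - X.mulVec βhat i - X.mulVec (δtil + Pi.single j t) i)^2
            = (Y i - X.mulVec βhat i - X.mulVec δtil i)^2
              - 2*t*((Y i - X.mulVec βhat i - X.mulVec δtil i) * X i j)
              + t^2 * (X i j)^2 := by
          intro i
          rw [Matrix.mulVec_add, Matrix.mulVec_single]
          simp only [Pi.add_apply, Pi.smul_apply, Matrix.col_apply, op_smul_eq_mul]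
          ring
        rw [Finset.sum_congr rfl (fun i _ => hexp i)] at hmin
        simp only [Finset.sum_add_distrib, Finset.sum_sub_distrib, ← Finset.mul_sum] at hmin
        rw [← hB, ← hA] at hmin
        linarith
      have hBsq : B^2 * (A + 2) ≤ 0 := by
        have hA1 : (0:ℝ) < A + 1 := by linarith
        have h2 := key (B/(A+1))
        have h4 := mul_le_mul_of_nonneg_right h2 (le_of_lt (mul_pos hA1 hA1))
        have e1 : 2*(B/(A+1))*B * ((A+1)*(A+1)) = 2*B^2*(A+1) := by field_simp
        have e2 : (B/(A+1))^2*A * ((A+1)*(A+1)) = B^2*A := by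
          rw [div_pow, div_mul_eq_mul_div, div_mul_eq_mul_div,
            div_eq_iff (by positivity : ((A+1)^2:ℝ) ≠ 0)]
          ring
        rw [e1, e2] at h4
        nlinarith [h4]
      have hB0 : B = 0 := by nlinarith [sq_nonneg B]
      have : (inner ℝ (b - v) (WithLp.toLp 2 (fun i => X i j) : EuclideanSpace ℝ (Fin n)) : ℝ) = B := by
        rw [hB]
        simp only [PiLp.inner_apply, RCLike.inner_apply, conj_trivial]
        refine Finset.sum_congr rfl fun i _ => ?_
        simp [PiLp.sub_apply, hb, hv, mul_comm]
      rw [this, hB0]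
    | zero => simp
    | add x y hx hy ihx ihy => simp [inner_add_right, ihx, ihy]
    | smul r x hx ihx => simp [inner_smul_right, ihx]
  have hproj : (Submodule.orthogonalProjection S b : EuclideanSpace ℝ (Fin n)) = v :=
    Submodule.eq_starProjection_of_mem_of_inner_eq_zero hvS horth
  set w : EuclideanSpace ℝ (Fin n) := WithLp.toLp 2 (fun i => X.mulVec δhat i) with hwdef
  have hwS : w ∈ S := hmem δhat (fun j h => h)
  have hU : Uhat = b - w := by
    ext i
    simp only [Uhat, hb, hwdef, PiLp.sub_apply, Matrix.mulVec_add, Pi.add_apply]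
    ring
  have hPU : (Submodule.orthogonalProjection S Uhat : EuclideanSpace ℝ (Fin n)) = v - w := by
    rw [hU, map_sub, Submodule.coe_sub, hproj]
    exact congrArg (v - ·) (Submodule.starProjection_eq_self_iff.mpr hwS)
  ext i
  rw [hPU]
  simp only [PiLp.sub_apply, hv, hwdef, Matrix.mulVec_add, Pi.add_apply]
  ring
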